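/- Let φ : G → ℝ be a homogeneous quasi-morphism with defect D, and let g ∈ [G,G] be a product of N commutators. Then |φ(g)| ≤ 2·N·D. Consequently, |φ(g)| ≤ 2·D·cl(g) for every element g of the commutator subgroup, where cl denotes commutator length. -/

import Mathlib

/-- `g` is a product of `n` commutators. -/
def IsCommProd {G : Type*} [Group G] (n : ℕ) (g : G) : Prop :=
  ∃ a b : Fin n → G, g = (List.ofFn fun i => a i * b i * (a i)⁻¹ * (b i)⁻¹).prod

/-- Commutator length: the minimal number of commutators whose product is `g`. -/
noncomputable def cl {G : Type*} [Group G] (g : G) : ℕ :=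
  sInf {n : ℕ | IsCommProd n g}

open Filter in
/-- Stable commutator length. -/
noncomputable def scl {G : Type*} [Group G] (g : G) : ℝ :=
  limUnder atTop (fun n : ℕ => (cl (g ^ n) : ℝ) / n)

lemma ofFn_reverse {G : Type*} (n : ℕ) (f : Fin n → G) :
    (List.ofFn f).reverse = List.ofFn (fun i => f i.rev) := by
  apply List.ext_getElem (by simp)
  intro i h1 h2
  simp [List.getElem_reverse, Fin.rev]
  congr 1
  ext
  simp at h1 h2 ⊢
  omega

lemma isCommProd_one {G : Type*} [Group G] : IsCommProd 0 (1 : G) :=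
  ⟨fun i => 1, fun i => 1, by simp⟩

lemma isCommProd_mul {G : Type*} [Group G] {m n : ℕ} {g h : G}
    (hg : IsCommProd m g) (hh : IsCommProd n h) : IsCommProd (m + n) (g * h) := by
  obtain ⟨a, b, rfl⟩ := hg
  obtain ⟨c, d, rfl⟩ := hh
  refine ⟨Fin.append a c, Fin.append b d, ?_⟩
  have : (fun i : Fin (m + n) =>
      Fin.append a c i * Fin.append b d i * (Fin.append a c i)⁻¹ * (Fin.append b d i)⁻¹)
      = Fin.append (fun i => a i * b i * (a i)⁻¹ * (b i)⁻¹)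
        (fun i => c i * d i * (c i)⁻¹ * (d i)⁻¹) := by
    funext i
    induction i using Fin.addCases with
    | left i => simp [Fin.append_left]
    | right i => simp [Fin.append_right]
  rw [this, List.ofFn_fin_append, List.prod_append]

lemma isCommProd_inv {G : Type*} [Group G] {n : ℕ} {g : G}
    (hg : IsCommProd n g) : IsCommProd n g⁻¹ := by
  obtain ⟨a, b, rfl⟩ := hg
  refine ⟨fun i => b i.rev, fun i => a i.rev, ?_⟩
  rw [List.prod_inv_reverse, List.map_ofFn, ofFn_reverse]
  refine congrArg List.prod (congrArg List.ofFn ?_)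
  funext i
  simp [Function.comp]
  group

lemma mem_commutator_isCommProd {G : Type*} [Group G] {g : G} (hg : g ∈ commutator G) :
    ∃ n, IsCommProd n g := by
  rw [commutator_eq_closure] at hg
  induction hg using Subgroup.closure_induction with
  | mem x hx =>
    obtain ⟨a, b, rfl⟩ := hx
    exact ⟨1, fun _ => a, fun _ => b, by simp [commutatorElement_def]⟩
  | one => exact ⟨0, isCommProd_one⟩
  | mul x y _ _ hx hy =>
    obtain ⟨m, hm⟩ := hx; obtain ⟨n, hn⟩ := hy
    exact ⟨m + n, isCommProd_mul hm hn⟩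
  | inv x _ hx =>
    obtain ⟨m, hm⟩ := hx
    exact ⟨m, isCommProd_inv hm⟩

theorem homogeneous_quasimorphism_cl_bound {G : Type*} [Group G] (φ : G → ℝ) (D : ℝ)
    (hD : ∀ g h : G, |φ (g * h) - φ g - φ h| ≤ D)
    (hhom : ∀ (g : G) (k : ℤ), φ (g ^ k) = (k : ℝ) * φ g) :
    (∀ (N : ℕ) (g : G), IsCommProd N g → |φ g| ≤ 2 * N * D) ∧
    (∀ g ∈ commutator G, |φ g| ≤ 2 * D * cl g) := by
  have h1 : φ 1 = 0 := by simpa using hhom 1 0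
  have hD0 : 0 ≤ D := by simpa [h1] using hD 1 1
  have hinv : ∀ g : G, φ g⁻¹ = -φ g := fun g => by simpa using hhom g (-1)
  have hconj : ∀ a g : G, φ (a * g * a⁻¹) = φ g := by
    intro a g
    have key : ∀ n : ℕ, (n : ℝ) * |φ (a * g * a⁻¹) - φ g| ≤ 2 * D := by
      intro n
      have e : (a * g * a⁻¹) ^ (n : ℤ) = a * g ^ (n : ℤ) * a⁻¹ := by
        simpa using (map_zpow (MulAut.conj a) g (n : ℤ)).symm
      have h4 : φ (a * g ^ (n : ℤ) * a⁻¹) = (n : ℝ) * φ (a * g * a⁻¹) := by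
        rw [← e]; exact hhom _ _
      have h3 : φ (g ^ (n : ℤ)) = (n : ℝ) * φ g := hhom g n
      have t1 : |φ (a * g ^ (n : ℤ) * a⁻¹) - φ a - φ (g ^ (n : ℤ) * a⁻¹)| ≤ D := by
        have := hD a (g ^ (n : ℤ) * a⁻¹); rwa [← mul_assoc] at this
      have t2 := hD (g ^ (n : ℤ)) a⁻¹
      have hia := hinv a
      have : |(n : ℝ) * φ (a * g * a⁻¹) - (n : ℝ) * φ g| ≤ 2 * D := by
        rw [abs_le] at t1 t2 ⊢
        constructor <;> nlinarith [t1.1, t1.2, t2.1, t2.2]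
      calc (n : ℝ) * |φ (a * g * a⁻¹) - φ g|
          = |(n : ℝ) * φ (a * g * a⁻¹) - (n : ℝ) * φ g| := by
            rw [← mul_sub, abs_mul, Nat.abs_cast]
        _ ≤ 2 * D := this
    by_contra hne
    have hc : 0 < |φ (a * g * a⁻¹) - φ g| := by
      rcases abs_pos.mpr (sub_ne_zero.mpr hne) with h; exact h
    obtain ⟨n, hn⟩ := exists_nat_gt (2 * D / |φ (a * g * a⁻¹) - φ g|)
    have := key n
    rw [div_lt_iff₀ hc] at hn
    linarith
  have hcommD : ∀ a b : G, |φ (a * b * a⁻¹ * b⁻¹)| ≤ D := by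
    intro a b
    have := hD (a * b * a⁻¹) b⁻¹
    rw [hconj a b, hinv b] at this
    simpa using this
  have hlist : ∀ l : List G, (∀ x ∈ l, |φ x| ≤ D) → |φ l.prod| ≤ 2 * l.length * D := by
    intro l
    induction l with
    | nil => intro _; simp [h1]
    | cons x l ih =>
      intro hx
      have h2 := ih fun y hy => hx y (List.mem_cons_of_mem _ hy)
      have h3 := hx x List.mem_cons_self
      have h4 := hD x l.prod
      rw [List.prod_cons]
      simp only [List.length_cons, Nat.cast_add, Nat.cast_one]
      rw [abs_le] at h2 h3 h4 ⊢
      constructor <;> nlinarith [h2.1, h2.2, h3.1, h3.2, h4.1, h4.2]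
  have part1 : ∀ (N : ℕ) (g : G), IsCommProd N g → |φ g| ≤ 2 * N * D := by
    intro N g hg
    obtain ⟨a, b, rfl⟩ := hg
    have := hlist (List.ofFn fun i => a i * b i * (a i)⁻¹ * (b i)⁻¹) ?_
    · simpa using this
    · intro x hx
      rw [List.mem_ofFn] at hx
      obtain ⟨i, rfl⟩ := hx
      exact hcommD _ _
  refine ⟨part1, ?_⟩
  intro g hg
  obtain ⟨n, hn⟩ := mem_commutator_isCommProd hg
  have hmem : IsCommProd (cl g) g := Nat.sInf_mem (⟨n, hn⟩ : {n : ℕ | IsCommProd n g}.Nonempty)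
  have := part1 (cl g) g hmem
  linarith [this, mul_nonneg (mul_nonneg (by norm_num : (0:ℝ) ≤ 2) (Nat.cast_nonneg (cl g))) hD0]
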